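/- Let δ ∈ (0,1), let μ be a probability measure on ℝ^D × {0,1} with coordinate random variables (X, Z), and let θ ∈ ℝ^D, φ ∈ ℝ satisfy θᵀx + φ ≠ 0 for μ-almost every x. Define Ŷ = τ(θᵀX + φ) ∈ {0,1} ⊆ ℝ. Then I_{V^δ}(Ŷ → Z) ≤ I_{V^δ}(X → Z), where I_{V^δ}(X → Z) is computed with the family V^δ on ℝ^D and I_{V^δ}(Ŷ → Z) is computed with the family V^δ on ℝ (viewing Ŷ as a real-valued input). That is, post-processing by a hard-thresholded linear classifier cannot increase V^δ-information about Z. -/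

import Mathlib

open MeasureTheory
open scoped BigOperators

/-- The logistic function `σ(u) = 1/(1+exp(−u))`. -/
noncomputable def logistic (u : ℝ) : ℝ := 1 / (1 + Real.exp (-u))

/-- The hard threshold function `τ(u) = 1` if `u > 0` and `τ(u) = 0` otherwise. -/
noncomputable def hardThreshold (u : ℝ) : ℝ := if u > 0 then 1 else 0

/-- The `δ`-discretization function `ρ_δ(p) = δ` if `p ≥ 1/2` and `1 − δ` otherwise. -/
noncomputable def discretize (δ : ℝ) (p : ℝ) : ℝ := if p ≥ 1/2 then δ else 1 - δ

/-- A member of the family `V^δ` of `δ`-discretized binary log-linear models, with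
parameters `a, γ`: the conditional probability it assigns to the label `z ∈ {0,1}`
(encoded as a `Bool`) given the input `x`, namely `q(0|x) = ρ_δ(σ(aᵀx+γ))` and
`q(1|x) = 1 − q(0|x)`. -/
noncomputable def qDisc {ι : Type*} [Fintype ι] (δ : ℝ) (a : ι → ℝ) (γ : ℝ)
    (x : ι → ℝ) (z : Bool) : ℝ :=
  if z then 1 - discretize δ (logistic ((∑ i, a i * x i) + γ))
  else discretize δ (logistic ((∑ i, a i * x i) + γ))

lemma logistic_ge_half_iff (u : ℝ) : logistic u ≥ 1/2 ↔ 0 ≤ u := by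
  unfold logistic
  have h1 : (0:ℝ) < 1 + Real.exp (-u) := by positivity
  rw [ge_iff_le, div_le_div_iff₀ (by norm_num) h1]
  constructor
  · intro h
    have : Real.exp (-u) ≤ 1 := by nlinarith
    have := Real.exp_le_one_iff.mp this
    linarith
  · intro h
    have : Real.exp (-u) ≤ 1 := Real.exp_le_one_iff.mpr (by linarith)
    nlinarith

lemma qDisc_eq {ι : Type*} [Fintype ι] (δ : ℝ) (a : ι → ℝ) (γ : ℝ) (x : ι → ℝ) (z : Bool) :
    qDisc δ a γ x z = if 0 ≤ (∑ i, a i * x i) + γ then (if z then 1 - δ else δ)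
      else (if z then δ else 1 - δ) := by
  unfold qDisc discretize
  have h2 := logistic_ge_half_iff ((∑ i, a i * x i) + γ)
  by_cases h : 0 ≤ (∑ i, a i * x i) + γ
  · rw [if_pos (h2.mpr h), if_pos h]
  · rw [if_neg (fun hh => h (h2.mp hh)), if_neg h]
    cases z <;> simp

lemma measurable_log_qDisc {ι : Type*} [Fintype ι] (δ : ℝ) (a : ι → ℝ) (γ : ℝ) :
    Measurable (fun w : (ι → ℝ) × Bool => Real.log (qDisc δ a γ w.1 w.2)) := by
  apply Real.measurable_log.comp
  simp only [qDisc_eq]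
  apply Measurable.ite
  · exact measurableSet_le measurable_const (by fun_prop)
  · exact (Measurable.of_discrete (f := fun z : Bool => if z then 1 - δ else δ)).comp measurable_snd
  · exact (Measurable.of_discrete (f := fun z : Bool => if z then δ else 1 - δ)).comp measurable_snd

lemma norm_log_qDisc_le {ι : Type*} [Fintype ι] {δ : ℝ} (a : ι → ℝ) (γ : ℝ)
    (x : ι → ℝ) (z : Bool) :
    ‖Real.log (qDisc δ a γ x z)‖ ≤ max |Real.log δ| |Real.log (1 - δ)| := by
  rw [qDisc_eq, Real.norm_eq_abs]
  split_ifs <;> simp [le_max_left, le_max_right]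

/-- The conditional `V^δ`-entropy `H_{V^δ}(Z|X) = −sup_{q∈V^δ} E[log q(z|x)]` of a joint
distribution `μ` of `(X, Z)`. -/
noncomputable def condEntDisc {ι : Type*} [Fintype ι] (δ : ℝ)
    (μ : Measure ((ι → ℝ) × Bool)) : ℝ :=
  - ⨆ p : (ι → ℝ) × ℝ, ∫ w, Real.log (qDisc δ p.1 p.2 w.1 w.2) ∂μ

/-- The `V^δ`-entropy `H_{V^δ}(Z) = −sup E[log q(z)]` over input-independent members
of `V^δ` (those with `a = 0`). -/
noncomputable def entDisc {ι : Type*} [Fintype ι] (δ : ℝ)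
    (μ : Measure ((ι → ℝ) × Bool)) : ℝ :=
  - ⨆ γ : ℝ, ∫ w, Real.log (qDisc δ (fun _ : ι => (0:ℝ)) γ w.1 w.2) ∂μ

/-- The `V^δ`-information `I_{V^δ}(X → Z) = H_{V^δ}(Z) − H_{V^δ}(Z|X)`. -/
noncomputable def vInfoDisc {ι : Type*} [Fintype ι] (δ : ℝ)
    (μ : Measure ((ι → ℝ) × Bool)) : ℝ :=
  entDisc δ μ - condEntDisc δ μ

/-- Post-processing by a hard-thresholded linear classifier `Ŷ = τ(θᵀX + φ)` cannot
increase `V^δ`-information about `Z`: `I_{V^δ}(Ŷ → Z) ≤ I_{V^δ}(X → Z)`, where `Ŷ` is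
viewed as a real-valued (one-dimensional) input. -/
theorem vInfoDisc_hardThreshold_le
    (D : ℕ) (δ : ℝ) (hδ : δ ∈ Set.Ioo (0:ℝ) 1)
    (μ : Measure ((Fin D → ℝ) × Bool)) [IsProbabilityMeasure μ]
    (θ : Fin D → ℝ) (φ : ℝ)
    (hne : ∀ᵐ w ∂μ, (∑ i, θ i * w.1 i) + φ ≠ 0) :
    vInfoDisc δ
        (μ.map (fun w => ((fun _ : Fin 1 => hardThreshold ((∑ i, θ i * w.1 i) + φ)), w.2)))
      ≤ vInfoDisc δ μ := by
  set f : ((Fin D → ℝ) × Bool) → (Fin 1 → ℝ) × Bool :=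
    fun w => ((fun _ : Fin 1 => hardThreshold ((∑ i, θ i * w.1 i) + φ)), w.2) with hf
  have hT : Measurable (fun w : (Fin D → ℝ) × Bool => (∑ i, θ i * w.1 i) + φ) := by fun_prop
  have hτ : Measurable (fun w : (Fin D → ℝ) × Bool =>
      hardThreshold ((∑ i, θ i * w.1 i) + φ)) := by
    unfold hardThreshold
    exact Measurable.ite (measurableSet_lt measurable_const hT) measurable_const measurable_const
  have hfm : Measurable f := by
    apply Measurable.prodMk _ measurable_snd
    exact measurable_pi_lambda _ (fun _ => hτ)
  -- entropy term is preserved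
  have hent : entDisc δ (μ.map f) = entDisc δ μ := by
    unfold entDisc
    congr 1
    apply iSup_congr
    intro γ
    rw [integral_map hfm.aemeasurable
      ((measurable_log_qDisc δ (fun _ : Fin 1 => (0:ℝ)) γ).aestronglyMeasurable)]
    apply integral_congr_ae
    filter_upwards with w
    simp [qDisc_eq, hf]
  -- conditional entropy can only increase
  have hcond : condEntDisc δ μ ≤ condEntDisc δ (μ.map f) := by
    unfold condEntDisc
    apply neg_le_neg
    have hbdd : BddAbove (Set.range fun p : (Fin D → ℝ) × ℝ =>
        ∫ w, Real.log (qDisc δ p.1 p.2 w.1 w.2) ∂μ) := by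
      refine ⟨max |Real.log δ| |Real.log (1 - δ)|, ?_⟩
      rintro _ ⟨p, rfl⟩
      refine le_trans (le_abs_self _) ?_
      rw [← Real.norm_eq_abs]
      calc ‖∫ w, Real.log (qDisc δ p.1 p.2 w.1 w.2) ∂μ‖
          ≤ (max |Real.log δ| |Real.log (1 - δ)|) * (μ Set.univ).toReal :=
            norm_integral_le_of_norm_le_const
              (Filter.Eventually.of_forall fun w => norm_log_qDisc_le p.1 p.2 w.1 w.2)
        _ = _ := by simp
    apply ciSup_le
    intro p
    have main : ∀ (α : Fin D → ℝ) (γ' : ℝ),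
        (∀ w : (Fin D → ℝ) × Bool, (∑ i, θ i * w.1 i) + φ ≠ 0 →
          ((0 ≤ p.1 0 * hardThreshold ((∑ i, θ i * w.1 i) + φ) + p.2)
            ↔ (0 ≤ (∑ i, α i * w.1 i) + γ'))) →
        ∫ w, Real.log (qDisc δ p.1 p.2 w.1 w.2) ∂(μ.map f)
          ≤ ⨆ p' : (Fin D → ℝ) × ℝ, ∫ w, Real.log (qDisc δ p'.1 p'.2 w.1 w.2) ∂μ := by
      intro α γ' hiffs
      have hkey : ∫ w, Real.log (qDisc δ p.1 p.2 w.1 w.2) ∂(μ.map f)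
          = ∫ w, Real.log (qDisc δ α γ' w.1 w.2) ∂μ := by
        rw [integral_map hfm.aemeasurable
          ((measurable_log_qDisc δ p.1 p.2).aestronglyMeasurable)]
        apply integral_congr_ae
        filter_upwards [hne] with w hw
        have hsum : (∑ i, p.1 i * (f w).1 i)
            = p.1 0 * hardThreshold ((∑ i, θ i * w.1 i) + φ) := by
          simp [hf, Fin.sum_univ_one]
        have hiff := hiffs w hw
        rw [qDisc_eq, qDisc_eq, hsum]
        by_cases hc : 0 ≤ p.1 0 * hardThreshold ((∑ i, θ i * w.1 i) + φ) + p.2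
        · rw [if_pos hc, if_pos (hiff.mp hc)]
        · rw [if_neg hc, if_neg (fun hh => hc (hiff.mpr hh))]
      rw [hkey]
      exact le_ciSup hbdd (α, γ')
    have hns : ∀ w : (Fin D → ℝ) × Bool,
        (∑ i, (-θ) i * w.1 i) = -(∑ i, θ i * w.1 i) := by
      intro w
      rw [← Finset.sum_neg_distrib]
      exact Finset.sum_congr rfl (fun i _ => by simp only [Pi.neg_apply]; ring)
    by_cases h1 : 0 ≤ p.2 <;> by_cases h2 : 0 ≤ p.1 0 + p.2
    · -- both nonneg: constant true classifier
      apply main (fun _ => 0) 0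
      intro w hw
      have hz : (∑ i, (fun _ : Fin D => (0:ℝ)) i * w.1 i) + 0 = 0 := by simp
      refine iff_of_true ?_ (by rw [hz])
      rcases lt_or_gt_of_ne hw with ht | ht
      · rw [show hardThreshold ((∑ i, θ i * w.1 i) + φ) = 0 from if_neg (not_lt.mpr ht.le)]
        simpa using h1
      · rw [show hardThreshold ((∑ i, θ i * w.1 i) + φ) = 1 from if_pos ht]
        simpa using h2
    · -- true iff t < 0
      apply main (-θ) (-φ)
      intro w hw
      rw [hns w]
      rcases lt_or_gt_of_ne hw with ht | ht
      · rw [show hardThreshold ((∑ i, θ i * w.1 i) + φ) = 0 from if_neg (not_lt.mpr ht.le)]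
        refine iff_of_true (by simpa using h1) (by linarith)
      · rw [show hardThreshold ((∑ i, θ i * w.1 i) + φ) = 1 from if_pos ht]
        refine iff_of_false (by simpa using h2) (by intro h; linarith)
    · -- true iff t > 0
      apply main θ φ
      intro w hw
      rcases lt_or_gt_of_ne hw with ht | ht
      · rw [show hardThreshold ((∑ i, θ i * w.1 i) + φ) = 0 from if_neg (not_lt.mpr ht.le)]
        refine iff_of_false (by simpa using h1) (by intro h; linarith)
      · rw [show hardThreshold ((∑ i, θ i * w.1 i) + φ) = 1 from if_pos ht]
        refine iff_of_true (by simpa using h2) ht.le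
    · -- both negative: constant false classifier
      apply main (fun _ => 0) (-1)
      intro w hw
      have hz : (∑ i, (fun _ : Fin D => (0:ℝ)) i * w.1 i) + (-1) = -1 := by simp
      refine iff_of_false ?_ (by rw [hz]; norm_num)
      rcases lt_or_gt_of_ne hw with ht | ht
      · rw [show hardThreshold ((∑ i, θ i * w.1 i) + φ) = 0 from if_neg (not_lt.mpr ht.le)]
        simpa using h1
      · rw [show hardThreshold ((∑ i, θ i * w.1 i) + φ) = 1 from if_pos ht]
        simpa using h2
  unfold vInfoDisc
  rw [hent]
  exact sub_le_sub_left hcond _
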